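/- Let N be an odd squarefree integer with ω(N) = 6 such that the smallest prime factor of N is at least 7 or the largest prime factor of N is greater than 569. Then (10/(3π)) · ( ∏_{p prime, p ∣ N} (2 + p^{3/4})/(1 + p) + 3 · ∏_{p prime, p ∣ N} (2 + p^{1/2})/(1 + p) ) < 1/12. -/

import Mathlib

open Finset

noncomputable def Fa : ℕ → ℝ := fun p => (2 + (p : ℝ) ^ ((3 : ℝ) / 4)) / (1 + (p : ℝ))
noncomputable def Ga : ℕ → ℝ := fun p => (2 + (p : ℝ) ^ ((1 : ℝ) / 2)) / (1 + (p : ℝ))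

lemma Fa_pos (n : ℕ) : 0 < Fa n := by unfold Fa; positivity
lemma Ga_pos (n : ℕ) : 0 < Ga n := by unfold Ga; positivity

lemma rpow34_le (x c : ℝ) (hx : 0 ≤ x) (hc : 0 ≤ c) (h : x ^ (3:ℕ) ≤ c ^ (4:ℕ)) :
    x ^ ((3:ℝ)/4) ≤ c := by
  have key : (x ^ ((3:ℝ)/4)) ^ (4:ℕ) ≤ c ^ (4:ℕ) := by
    rw [← Real.rpow_natCast (x ^ ((3:ℝ)/4)) 4, ← Real.rpow_mul hx]
    norm_num
    exact h
  exact le_of_pow_le_pow_left₀ (by norm_num) hc key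

lemma rpow12_le (x c : ℝ) (hx : 0 ≤ x) (hc : 0 ≤ c) (h : x ≤ c ^ (2:ℕ)) :
    x ^ ((1:ℝ)/2) ≤ c := by
  have key : (x ^ ((1:ℝ)/2)) ^ (2:ℕ) ≤ c ^ (2:ℕ) := by
    rw [← Real.rpow_natCast (x ^ ((1:ℝ)/2)) 2, ← Real.rpow_mul hx]
    norm_num
    exact h
  exact le_of_pow_le_pow_left₀ (by norm_num) hc key

lemma pow4_eq (x : ℝ) (hx0 : 0 ≤ x) : (x ^ ((1:ℝ)/4)) ^ (4:ℕ) = x := by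
  rw [← Real.rpow_natCast (x ^ ((1:ℝ)/4)) 4, ← Real.rpow_mul hx0]
  norm_num

lemma pow43_eq (x : ℝ) (hx0 : 0 ≤ x) : (x ^ ((1:ℝ)/4)) ^ (3:ℕ) = x ^ ((3:ℝ)/4) := by
  rw [← Real.rpow_natCast (x ^ ((1:ℝ)/4)) 3, ← Real.rpow_mul hx0]
  norm_num

lemma Fa_anti_real (x y : ℝ) (hx : 1 ≤ x) (hxy : x ≤ y) :
    (2 + y ^ ((3:ℝ)/4)) / (1 + y) ≤ (2 + x ^ ((3:ℝ)/4)) / (1 + x) := by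
  have hx0 : (0:ℝ) ≤ x := by linarith
  have hy0 : (0:ℝ) ≤ y := by linarith
  set s := x ^ ((1:ℝ)/4) with hs
  set t := y ^ ((1:ℝ)/4) with ht
  have hs1 : 1 ≤ s := by
    have := Real.rpow_le_rpow (by norm_num : (0:ℝ) ≤ 1) hx (by norm_num : (0:ℝ) ≤ 1/4)
    rwa [Real.one_rpow] at this
  have hst : s ≤ t := Real.rpow_le_rpow hx0 hxy (by norm_num)
  have hx4 : s ^ (4:ℕ) = x := pow4_eq x hx0
  have hy4 : t ^ (4:ℕ) = y := pow4_eq y hy0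
  have hx3 : x ^ ((3:ℝ)/4) = s ^ (3:ℕ) := (pow43_eq x hx0).symm
  have hy3 : y ^ ((3:ℝ)/4) = t ^ (3:ℕ) := (pow43_eq y hy0).symm
  rw [hx3, hy3, ← hx4, ← hy4]
  rw [div_le_div_iff₀ (by positivity) (by positivity)]
  nlinarith [mul_nonneg (sub_nonneg.2 hst) (sub_nonneg.2 (by nlinarith : s*t ≤ t^2 + s^2)),
    mul_nonneg (mul_nonneg (sub_nonneg.2 hst) (by positivity : (0:ℝ) ≤ s^3)) (by positivity : (0:ℝ) ≤ t^3),
    mul_nonneg (mul_nonneg (sub_nonneg.2 hst) (sub_nonneg.2 hs1)) (by positivity : (0:ℝ) ≤ t^2+s^2),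
    mul_nonneg (mul_nonneg (sub_nonneg.2 hst) (by linarith : (0:ℝ) ≤ t)) (by positivity : (0:ℝ) ≤ t^2+s^2)]

lemma Ga_anti_real (x y : ℝ) (hx : 1 ≤ x) (hxy : x ≤ y) :
    (2 + y ^ ((1:ℝ)/2)) / (1 + y) ≤ (2 + x ^ ((1:ℝ)/2)) / (1 + x) := by
  have hx0 : (0:ℝ) ≤ x := by linarith
  have hy0 : (0:ℝ) ≤ y := by linarith
  set s := x ^ ((1:ℝ)/2) with hs
  set t := y ^ ((1:ℝ)/2) with ht
  have hs1 : 1 ≤ s := by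
    have := Real.rpow_le_rpow (by norm_num : (0:ℝ) ≤ 1) hx (by norm_num : (0:ℝ) ≤ 1/2)
    rwa [Real.one_rpow] at this
  have hst : s ≤ t := Real.rpow_le_rpow hx0 hxy (by norm_num)
  have hx2 : s ^ (2:ℕ) = x := by
    rw [hs, ← Real.rpow_natCast (x ^ _) 2, ← Real.rpow_mul hx0]; norm_num
  have hy2 : t ^ (2:ℕ) = y := by
    rw [ht, ← Real.rpow_natCast (y ^ _) 2, ← Real.rpow_mul hy0]; norm_num
  rw [← hx2, ← hy2]
  rw [div_le_div_iff₀ (by positivity) (by positivity)]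
  nlinarith [mul_nonneg (sub_nonneg.2 hst) (sub_nonneg.2 (by nlinarith : (1:ℝ) ≤ s*t)),
    mul_nonneg (sub_nonneg.2 hst) (by linarith : (0:ℝ) ≤ t + s)]

lemma Fa_anti (a b : ℕ) (h3 : 3 ≤ a) (hab : a ≤ b) : Fa b ≤ Fa a := by
  have h1 : (1:ℝ) ≤ (a:ℝ) := by exact_mod_cast le_trans (by norm_num) h3
  exact Fa_anti_real (a:ℝ) (b:ℝ) h1 (by exact_mod_cast hab)

lemma Ga_anti (a b : ℕ) (h3 : 3 ≤ a) (hab : a ≤ b) : Ga b ≤ Ga a := by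
  have h1 : (1:ℝ) ≤ (a:ℝ) := by exact_mod_cast le_trans (by norm_num) h3
  exact Ga_anti_real (a:ℝ) (b:ℝ) h1 (by exact_mod_cast hab)

lemma Fa_le2 (a : ℕ) (r c : ℝ) (hr : 0 ≤ r) (h : ((a:ℝ)) ^ (3:ℕ) ≤ r ^ (4:ℕ))
    (hc : 2 + r ≤ c * (1 + (a:ℝ))) : Fa a ≤ c := by
  unfold Fa
  rw [div_le_iff₀ (by positivity)]
  have := rpow34_le ((a:ℝ)) r (by positivity) hr h
  linarith

lemma Ga_le2 (a : ℕ) (r c : ℝ) (hr : 0 ≤ r) (h : ((a:ℝ)) ≤ r ^ (2:ℕ))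
    (hc : 2 + r ≤ c * (1 + (a:ℝ))) : Ga a ≤ c := by
  unfold Ga
  rw [div_le_iff₀ (by positivity)]
  have := rpow12_le ((a:ℝ)) r (by positivity) hr h
  linarith

lemma Fa_big (q : ℕ) (hq : 570 ≤ q) : Fa q ≤ 0.2083 := by
  have hx : (570:ℝ) ≤ (q:ℝ) := by exact_mod_cast hq
  have h34 : (q:ℝ) ^ ((3:ℝ)/4) ≤ 0.2047 * q := by
    apply rpow34_le _ _ (by positivity) (by positivity)
    nlinarith [pow_pos (show (0:ℝ) < q by linarith) 3, sq_nonneg ((q:ℝ))]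
  unfold Fa
  rw [div_le_iff₀ (by positivity)]
  nlinarith

lemma Ga_big (q : ℕ) (hq : 570 ≤ q) : Ga q ≤ 0.0455 := by
  have hx : (570:ℝ) ≤ (q:ℝ) := by exact_mod_cast hq
  have h12 : (q:ℝ) ^ ((1:ℝ)/2) ≤ 0.0419 * q := by
    apply rpow12_le _ _ (by positivity) (by positivity)
    nlinarith
  unfold Ga
  rw [div_le_iff₀ (by positivity)]
  nlinarith

lemma extract' (f : ℕ → ℝ) (hpos : ∀ n : ℕ, 0 < f n)
    (hanti : ∀ a b : ℕ, 3 ≤ a → a ≤ b → f b ≤ f a)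
    (S : Finset ℕ) (n : ℕ) (a : ℕ) (c D : ℝ)
    (hcard : S.card = n + 1) (h3 : 3 ≤ a) (ha : ∀ p ∈ S, a ≤ p)
    (hac : f a ≤ c) (hD : 0 ≤ D)
    (hrec : ∀ T : Finset ℕ, T ⊆ S → T.card = n → (∀ p ∈ T, a < p) → ∏ p ∈ T, f p ≤ D) :
    ∏ p ∈ S, f p ≤ c * D := by
  have hne : S.Nonempty := card_pos.mp (by omega)
  set m := S.min' hne with hm
  have hmS : m ∈ S := S.min'_mem hne
  have ham : a ≤ m := ha m hmS
  have heq : ∏ p ∈ S, f p = f m * ∏ p ∈ S.erase m, f p := (Finset.mul_prod_erase S f hmS).symm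
  have hTcard : (S.erase m).card = n := by rw [card_erase_of_mem hmS, hcard]; omega
  have hgt : ∀ p ∈ S.erase m, a < p := by
    intro p hp
    have h1 := S.min'_le p (mem_of_mem_erase hp)
    have h2 : p ≠ m := ne_of_mem_erase hp
    omega
  have h1 : f m ≤ c := le_trans (hanti a m h3 ham) hac
  have h2 : ∏ p ∈ S.erase m, f p ≤ D := hrec _ (erase_subset _ _) hTcard hgt
  have hprod : 0 < ∏ p ∈ S.erase m, f p := Finset.prod_pos (fun i _ => hpos i)
  rw [heq]
  exact mul_le_mul h1 h2 hprod.le (le_trans (hpos m).le h1)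

lemma gap3 (p : ℕ) (hp : p.Prime) (h : 3 < p) : 5 ≤ p := by
  by_contra h'; push_neg at h'; interval_cases p <;> norm_num at hp
lemma gap5 (p : ℕ) (hp : p.Prime) (h : 5 < p) : 7 ≤ p := by
  by_contra h'; push_neg at h'; interval_cases p <;> norm_num at hp
lemma gap7 (p : ℕ) (hp : p.Prime) (h : 7 < p) : 11 ≤ p := by
  by_contra h'; push_neg at h'; interval_cases p <;> norm_num at hp
lemma gap11 (p : ℕ) (hp : p.Prime) (h : 11 < p) : 13 ≤ p := by
  by_contra h'; push_neg at h'; interval_cases p <;> norm_num at hp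
lemma gap13 (p : ℕ) (hp : p.Prime) (h : 13 < p) : 17 ≤ p := by
  by_contra h'; push_neg at h'; interval_cases p <;> norm_num at hp
lemma gap17 (p : ℕ) (hp : p.Prime) (h : 17 < p) : 19 ≤ p := by
  by_contra h'; push_neg at h'; interval_cases p <;> norm_num at hp
lemma gap19 (p : ℕ) (hp : p.Prime) (h : 19 < p) : 23 ≤ p := by
  by_contra h'; push_neg at h'; interval_cases p <;> norm_num at hp

-- concrete numeric bounds
lemma F3 : Fa 3 ≤ 1.0699 := Fa_le2 3 2.2796 _ (by norm_num) (by norm_num) (by norm_num)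
lemma F5 : Fa 5 ≤ 0.8907 := Fa_le2 5 3.3438 _ (by norm_num) (by norm_num) (by norm_num)
lemma F7 : Fa 7 ≤ 0.78795 := Fa_le2 7 4.3036 _ (by norm_num) (by norm_num) (by norm_num)
lemma F11 : Fa 11 ≤ 0.6701 := Fa_le2 11 6.0402 _ (by norm_num) (by norm_num) (by norm_num)
lemma F13 : Fa 13 ≤ 0.632 := Fa_le2 13 6.8474 _ (by norm_num) (by norm_num) (by norm_num)
lemma F17 : Fa 17 ≤ 0.5763 := Fa_le2 17 8.3724 _ (by norm_num) (by norm_num) (by norm_num)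
lemma F19 : Fa 19 ≤ 0.55505 := Fa_le2 19 9.101 _ (by norm_num) (by norm_num) (by norm_num)
lemma F23 : Fa 23 ≤ 0.521 := Fa_le2 23 10.503 _ (by norm_num) (by norm_num) (by norm_num)

lemma G3 : Ga 3 ≤ 0.933025 := Ga_le2 3 1.7321 _ (by norm_num) (by norm_num) (by norm_num)
lemma G5 : Ga 5 ≤ 0.7061 := Ga_le2 5 2.2361 _ (by norm_num) (by norm_num) (by norm_num)
lemma G7 : Ga 7 ≤ 0.580725 := Ga_le2 7 2.6458 _ (by norm_num) (by norm_num) (by norm_num)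
lemma G11 : Ga 11 ≤ 0.4431 := Ga_le2 11 3.3167 _ (by norm_num) (by norm_num) (by norm_num)
lemma G13 : Ga 13 ≤ 0.4004 := Ga_le2 13 3.6056 _ (by norm_num) (by norm_num) (by norm_num)
lemma G17 : Ga 17 ≤ 0.3402 := Ga_le2 17 4.1232 _ (by norm_num) (by norm_num) (by norm_num)
lemma G19 : Ga 19 ≤ 0.317945 := Ga_le2 19 4.3589 _ (by norm_num) (by norm_num) (by norm_num)
lemma G23 : Ga 23 ≤ 0.2832 := Ga_le2 23 4.7959 _ (by norm_num) (by norm_num) (by norm_num)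

/-- For an odd squarefree integer `N` with exactly `6` distinct prime factors whose smallest
prime factor is at least `7` or whose largest prime factor is greater than `569`, the key
inequality holds. -/
theorem key_inequality_omega_eq_6 (N : ℕ) (hodd : Odd N) (hsf : Squarefree N)
    (hω : N.primeFactors.card = 6)
    (hP : (∀ p ∈ N.primeFactors, 7 ≤ p) ∨ (∃ p ∈ N.primeFactors, 569 < p)) :
    10 / (3 * Real.pi) *
        ((∏ p ∈ N.primeFactors, (2 + (p : ℝ) ^ ((3 : ℝ) / 4)) / (1 + (p : ℝ))) +
          3 * ∏ p ∈ N.primeFactors, (2 + (p : ℝ) ^ ((1 : ℝ) / 2)) / (1 + (p : ℝ))) <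
      1 / 12 := by
  set S := N.primeFactors with hS
  have hprime : ∀ p ∈ S, p.Prime := fun p hp => Nat.prime_of_mem_primeFactors hp
  have hodd3 : ∀ p ∈ S, 3 ≤ p := by
    intro p hp
    have hpp := hprime p hp
    have hdvd : p ∣ N := Nat.dvd_of_mem_primeFactors hp
    rcases Nat.lt_or_ge p 3 with h | h
    · interval_cases p
      · exact absurd hpp (by norm_num)
      · exact absurd hpp (by norm_num)
      · obtain ⟨k, hk⟩ := hodd
        obtain ⟨m, hm⟩ := hdvd
        omega
    · exact h
  have hPF : (∏ p ∈ S, (2 + (p : ℝ) ^ ((3 : ℝ) / 4)) / (1 + (p : ℝ))) = ∏ p ∈ S, Fa p := rfl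
  have hPG : (∏ p ∈ S, (2 + (p : ℝ) ^ ((1 : ℝ) / 2)) / (1 + (p : ℝ))) = ∏ p ∈ S, Ga p := rfl
  have hπ := Real.pi_gt_d6
  have hFpos : 0 < ∏ p ∈ S, Fa p := Finset.prod_pos (fun i _ => Fa_pos i)
  have hGpos : 0 < ∏ p ∈ S, Ga p := Finset.prod_pos (fun i _ => Ga_pos i)
  rw [hPF, hPG]
  rcases hP with hge7 | ⟨q, hqS, hq569⟩
  · -- all primes ≥ 7
    have hF : ∏ p ∈ S, Fa p ≤
        0.78795*(0.6701*(0.632*(0.5763*(0.55505*(0.521*1))))) := by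
      refine extract' Fa Fa_pos Fa_anti S 5 7 _ _ hω (by norm_num) hge7 F7 (by norm_num) ?_
      intro T1 hs1 hc1 hg1
      refine extract' Fa Fa_pos Fa_anti T1 4 11 _ _ hc1 (by norm_num)
        (fun p hp => gap7 p (hprime p (hs1 hp)) (hg1 p hp)) F11 (by norm_num) ?_
      intro T2 hs2 hc2 hg2
      refine extract' Fa Fa_pos Fa_anti T2 3 13 _ _ hc2 (by norm_num)
        (fun p hp => gap11 p (hprime p (hs1 (hs2 hp))) (hg2 p hp)) F13 (by norm_num) ?_
      intro T3 hs3 hc3 hg3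
      refine extract' Fa Fa_pos Fa_anti T3 2 17 _ _ hc3 (by norm_num)
        (fun p hp => gap13 p (hprime p (hs1 (hs2 (hs3 hp)))) (hg3 p hp)) F17 (by norm_num) ?_
      intro T4 hs4 hc4 hg4
      refine extract' Fa Fa_pos Fa_anti T4 1 19 _ _ hc4 (by norm_num)
        (fun p hp => gap17 p (hprime p (hs1 (hs2 (hs3 (hs4 hp))))) (hg4 p hp)) F19 (by norm_num) ?_
      intro T5 hs5 hc5 hg5
      refine extract' Fa Fa_pos Fa_anti T5 0 23 _ _ hc5 (by norm_num)
        (fun p hp => gap19 p (hprime p (hs1 (hs2 (hs3 (hs4 (hs5 hp)))))) (hg5 p hp)) F23 (by norm_num) ?_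
      intro T6 _ hc6 _
      rw [Finset.card_eq_zero] at hc6
      simp [hc6]
    have hG : ∏ p ∈ S, Ga p ≤
        0.580725*(0.4431*(0.4004*(0.3402*(0.317945*(0.2832*1))))) := by
      refine extract' Ga Ga_pos Ga_anti S 5 7 _ _ hω (by norm_num) hge7 G7 (by norm_num) ?_
      intro T1 hs1 hc1 hg1
      refine extract' Ga Ga_pos Ga_anti T1 4 11 _ _ hc1 (by norm_num)
        (fun p hp => gap7 p (hprime p (hs1 hp)) (hg1 p hp)) G11 (by norm_num) ?_
      intro T2 hs2 hc2 hg2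
      refine extract' Ga Ga_pos Ga_anti T2 3 13 _ _ hc2 (by norm_num)
        (fun p hp => gap11 p (hprime p (hs1 (hs2 hp))) (hg2 p hp)) G13 (by norm_num) ?_
      intro T3 hs3 hc3 hg3
      refine extract' Ga Ga_pos Ga_anti T3 2 17 _ _ hc3 (by norm_num)
        (fun p hp => gap13 p (hprime p (hs1 (hs2 (hs3 hp)))) (hg3 p hp)) G17 (by norm_num) ?_
      intro T4 hs4 hc4 hg4
      refine extract' Ga Ga_pos Ga_anti T4 1 19 _ _ hc4 (by norm_num)
        (fun p hp => gap17 p (hprime p (hs1 (hs2 (hs3 (hs4 hp))))) (hg4 p hp)) G19 (by norm_num) ?_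
      intro T5 hs5 hc5 hg5
      refine extract' Ga Ga_pos Ga_anti T5 0 23 _ _ hc5 (by norm_num)
        (fun p hp => gap19 p (hprime p (hs1 (hs2 (hs3 (hs4 (hs5 hp)))))) (hg5 p hp)) G23 (by norm_num) ?_
      intro T6 _ hc6 _
      rw [Finset.card_eq_zero] at hc6
      simp [hc6]
    calc 10 / (3 * Real.pi) * ((∏ p ∈ S, Fa p) + 3 * ∏ p ∈ S, Ga p)
        ≤ 10 / (3 * Real.pi) *
          (0.78795*(0.6701*(0.632*(0.5763*(0.55505*(0.521*1))))) +
           3 * (0.580725*(0.4431*(0.4004*(0.3402*(0.317945*(0.2832*1))))))) := by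
          gcongr
      _ < 10 / (3 * 3.141592) *
          (0.78795*(0.6701*(0.632*(0.5763*(0.55505*(0.521*1))))) +
           3 * (0.580725*(0.4431*(0.4004*(0.3402*(0.317945*(0.2832*1))))))) := by
          apply mul_lt_mul_of_pos_right _ (by norm_num)
          apply div_lt_div_of_pos_left (by norm_num) (by norm_num)
          linarith
      _ < 1 / 12 := by norm_num
  · -- some prime factor q ≥ 570
    have hqP : q.Prime := hprime q hqS
    have hq570 : 570 ≤ q := by omega
    have hErase : ∀ {f : ℕ → ℝ}, ∏ p ∈ S, f p = f q * ∏ p ∈ S.erase q, f p :=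
      fun {f} => (Finset.mul_prod_erase S f hqS).symm
    have hEcard : (S.erase q).card = 5 := by rw [card_erase_of_mem hqS, hω]
    have hge3 : ∀ p ∈ S.erase q, 3 ≤ p := fun p hp => hodd3 p (mem_of_mem_erase hp)
    have hF : ∏ p ∈ S, Fa p ≤
        0.2083 * (1.0699*(0.8907*(0.78795*(0.6701*(0.632*1))))) := by
      rw [hErase]
      apply mul_le_mul (Fa_big q hq570) _
        (Finset.prod_pos (fun i _ => Fa_pos i)).le (by norm_num)
      refine extract' Fa Fa_pos Fa_anti (S.erase q) 4 3 _ _ hEcard (by norm_num) hge3 F3 (by norm_num) ?_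
      intro T1 hs1 hc1 hg1
      have hP1 : ∀ p ∈ T1, p.Prime := fun p hp => hprime p (mem_of_mem_erase (hs1 hp))
      refine extract' Fa Fa_pos Fa_anti T1 3 5 _ _ hc1 (by norm_num)
        (fun p hp => gap3 p (hP1 p hp) (hg1 p hp)) F5 (by norm_num) ?_
      intro T2 hs2 hc2 hg2
      refine extract' Fa Fa_pos Fa_anti T2 2 7 _ _ hc2 (by norm_num)
        (fun p hp => gap5 p (hP1 p (hs2 hp)) (hg2 p hp)) F7 (by norm_num) ?_
      intro T3 hs3 hc3 hg3
      refine extract' Fa Fa_pos Fa_anti T3 1 11 _ _ hc3 (by norm_num)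
        (fun p hp => gap7 p (hP1 p (hs2 (hs3 hp))) (hg3 p hp)) F11 (by norm_num) ?_
      intro T4 hs4 hc4 hg4
      refine extract' Fa Fa_pos Fa_anti T4 0 13 _ _ hc4 (by norm_num)
        (fun p hp => gap11 p (hP1 p (hs2 (hs3 (hs4 hp)))) (hg4 p hp)) F13 (by norm_num) ?_
      intro T5 _ hc5 _
      rw [Finset.card_eq_zero] at hc5
      simp [hc5]
    have hG : ∏ p ∈ S, Ga p ≤
        0.0455 * (0.933025*(0.7061*(0.580725*(0.4431*(0.4004*1))))) := by
      rw [hErase]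
      apply mul_le_mul (Ga_big q hq570) _
        (Finset.prod_pos (fun i _ => Ga_pos i)).le (by norm_num)
      refine extract' Ga Ga_pos Ga_anti (S.erase q) 4 3 _ _ hEcard (by norm_num) hge3 G3 (by norm_num) ?_
      intro T1 hs1 hc1 hg1
      have hP1 : ∀ p ∈ T1, p.Prime := fun p hp => hprime p (mem_of_mem_erase (hs1 hp))
      refine extract' Ga Ga_pos Ga_anti T1 3 5 _ _ hc1 (by norm_num)
        (fun p hp => gap3 p (hP1 p hp) (hg1 p hp)) G5 (by norm_num) ?_
      intro T2 hs2 hc2 hg2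
      refine extract' Ga Ga_pos Ga_anti T2 2 7 _ _ hc2 (by norm_num)
        (fun p hp => gap5 p (hP1 p (hs2 hp)) (hg2 p hp)) G7 (by norm_num) ?_
      intro T3 hs3 hc3 hg3
      refine extract' Ga Ga_pos Ga_anti T3 1 11 _ _ hc3 (by norm_num)
        (fun p hp => gap7 p (hP1 p (hs2 (hs3 hp))) (hg3 p hp)) G11 (by norm_num) ?_
      intro T4 hs4 hc4 hg4
      refine extract' Ga Ga_pos Ga_anti T4 0 13 _ _ hc4 (by norm_num)
        (fun p hp => gap11 p (hP1 p (hs2 (hs3 (hs4 hp)))) (hg4 p hp)) G13 (by norm_num) ?_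
      intro T5 _ hc5 _
      rw [Finset.card_eq_zero] at hc5
      simp [hc5]
    calc 10 / (3 * Real.pi) * ((∏ p ∈ S, Fa p) + 3 * ∏ p ∈ S, Ga p)
        ≤ 10 / (3 * Real.pi) *
          (0.2083 * (1.0699*(0.8907*(0.78795*(0.6701*(0.632*1))))) +
           3 * (0.0455 * (0.933025*(0.7061*(0.580725*(0.4431*(0.4004*1))))))) := by
          gcongr
      _ < 10 / (3 * 3.141592) *
          (0.2083 * (1.0699*(0.8907*(0.78795*(0.6701*(0.632*1))))) +
           3 * (0.0455 * (0.933025*(0.7061*(0.580725*(0.4431*(0.4004*1))))))) := by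
          apply mul_lt_mul_of_pos_right _ (by norm_num)
          apply div_lt_div_of_pos_left (by norm_num) (by norm_num)
          linarith
      _ < 1 / 12 := by norm_num
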